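/- For t > 0 define T : ℝ² → ℝ² by T(x₁, x₂) = ((1−2t)x₁ − 2t x₂, x₂) (the blockwise proximal-gradient update of Example 2.2 in the first coordinate). Then: (a) for every t > 0 and every α ∈ (0,1), T is NOT α-fne on ℝ², i.e., there exist x, y ∈ ℝ² with ‖Tx − Ty‖² > ‖x − y‖² − ((1−α)/α)‖(x − Tx) − (y − Ty)‖²; and (b) for every t ∈ (0, 1/2), every z ∈ ℝ, and every α ∈ [t, 1), T is α-fne with constant α on the affine line ℝ × {z}: for all x, y ∈ ℝ² with x₂ = y₂ = z, ‖Tx − Ty‖² ≤ ‖x − y‖² − ((1−α)/α)‖(x − Tx) − (y − Ty)‖². -/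

import Mathlib

noncomputable section

/-- The blockwise proximal-gradient update of Example 2.2 (first coordinate updated):
`T(x₁, x₂) = ((1 − 2t)x₁ − 2t x₂, x₂)` on `ℝ²` (as `EuclideanSpace ℝ (Fin 2)`). -/
def Tpg (t : ℝ) (x : EuclideanSpace ℝ (Fin 2)) : EuclideanSpace ℝ (Fin 2) :=
  WithLp.toLp 2 (fun i => if i = 0 then (1 - 2 * t) * x 0 - 2 * t * x 1 else x 1)

lemma normsq_eq (v : EuclideanSpace ℝ (Fin 2)) : ‖v‖ ^ 2 = v 0 ^ 2 + v 1 ^ 2 := by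
  rw [EuclideanSpace.norm_eq, Real.sq_sqrt (by positivity)]
  simp [Fin.sum_univ_two, sq_abs]

/-- (a) for every `t > 0` and every `α ∈ (0,1)`, `T` is not α-fne on `ℝ²`;
(b) for every `t ∈ (0, 1/2)`, every `z : ℝ` and every `α ∈ [t, 1)`, `T` is α-fne with constant
`α` on the affine line `ℝ × {z}`. -/
theorem statement19 :
    (∀ t : ℝ, 0 < t → ∀ α : ℝ, α ∈ Set.Ioo (0 : ℝ) 1 →
      ∃ x y : EuclideanSpace ℝ (Fin 2),
        ‖x - y‖ ^ 2 - ((1 - α) / α) * ‖(x - Tpg t x) - (y - Tpg t y)‖ ^ 2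
          < ‖Tpg t x - Tpg t y‖ ^ 2)
    ∧ (∀ t : ℝ, t ∈ Set.Ioo (0 : ℝ) (1 / 2) → ∀ z : ℝ, ∀ α : ℝ, α ∈ Set.Ico t 1 →
      ∀ x y : EuclideanSpace ℝ (Fin 2), x 1 = z → y 1 = z →
        ‖Tpg t x - Tpg t y‖ ^ 2
          ≤ ‖x - y‖ ^ 2 - ((1 - α) / α) * ‖(x - Tpg t x) - (y - Tpg t y)‖ ^ 2) := by
  constructor
  · intro t ht α hα
    refine ⟨(WithLp.toLp 2 (fun i => if i = 1 then 1 else 0) : EuclideanSpace ℝ (Fin 2)), 0, ?_⟩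
    simp only [normsq_eq, Tpg, PiLp.sub_apply, PiLp.toLp_apply]
    norm_num
    have h1 : (0:ℝ) < (1 - α) / α := by
      apply div_pos <;> linarith [hα.1, hα.2]
    nlinarith [mul_pos h1 (mul_pos ht ht)]
  · intro t ht z α hα x y hx hy
    simp only [normsq_eq, Tpg, PiLp.sub_apply, PiLp.toLp_apply, hx, hy]
    norm_num
    have hα0 : (0:ℝ) < α := lt_of_lt_of_le ht.1 hα.1
    have key : ((1 - α) / α) * (2 * t) ^ 2 ≤ 4 * t - 4 * t ^ 2 := by
      rw [div_mul_eq_mul_div, div_le_iff₀ hα0]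
      nlinarith [hα.1, ht.1]
    nlinarith [sq_nonneg (x 0 - y 0), mul_le_mul_of_nonneg_right key (sq_nonneg (x 0 - y 0))]
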